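/- For the 4-dimensional Lotka-Volterra system ẋ = x_i(Ax)_i with antisymmetric matrix A having upper-triangular entries A_{12}=a₁, A_{13}=A_{23}=b₁, A_{14}=A_{24}=c₁, A_{34}=a₂, the function F = (x₁+x₂)^{a₂} x₃^{-c₁} x₄^{b₁} is a constant of motion on the positive orthant. -/

import Mathlib

open Real Finset

/-- i-th component of the gradient of `F` at `x`. -/
noncomputable def grad {n : ℕ} (F : (Fin n → ℝ) → ℝ) (x : Fin n → ℝ) (i : Fin n) : ℝ :=
  fderiv ℝ F x (Pi.single i 1)

/-- Lie derivative (directional derivative) of `F` along the vector field `f` at `x`. -/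
noncomputable def lieDeriv {n : ℕ} (F : (Fin n → ℝ) → ℝ) (f : (Fin n → ℝ) → Fin n → ℝ)
    (x : Fin n → ℝ) : ℝ := ∑ i, grad F x i * f x i

/-- The Poisson bracket {F,G}(x) = Σ_{i,j} A_{ij} x_i x_j ∂_iF ∂_jG. -/
noncomputable def pbracket {n : ℕ} (A : Matrix (Fin n) (Fin n) ℝ)
    (F G : (Fin n → ℝ) → ℝ) (x : Fin n → ℝ) : ℝ :=
  ∑ i, ∑ j, A i j * x i * x j * grad F x i * grad G x j

/-- The (possibly inhomogeneous) Lotka-Volterra vector field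
`f_i(x) = x_i (r_i + Σ_j A_{ij} x_j)`. -/
def lvField {n : ℕ} (A : Matrix (Fin n) (Fin n) ℝ) (r : Fin n → ℝ)
    (x : Fin n → ℝ) (i : Fin n) : ℝ := x i * (r i + ∑ j, A i j * x j)

/-- for the 4-dim LV system of type [1,0,0],
F = (x₁+x₂)^{a₂} x₃^{-c₁} x₄^{b₁} is a constant of motion. -/
theorem stmt5 (a₁ a₂ b₁ c₁ : ℝ) :
    let A : Matrix (Fin 4) (Fin 4) ℝ :=
      !![0, a₁, b₁, c₁; -a₁, 0, b₁, c₁; -b₁, -b₁, 0, a₂; -c₁, -c₁, -a₂, 0]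
    let F : (Fin 4 → ℝ) → ℝ :=
      fun x => (x 0 + x 1) ^ a₂ * x 2 ^ (-c₁) * x 3 ^ b₁
    ∀ x : Fin 4 → ℝ, (∀ i, 0 < x i) → lieDeriv F (lvField A 0) x = 0 := by
  intro A F x hx
  have hs : 0 < x 0 + x 1 := add_pos (hx 0) (hx 1)
  have h2 : 0 < x 2 := hx 2
  have h3 : 0 < x 3 := hx 3
  have hsum : HasFDerivAt (fun y : Fin 4 → ℝ => y 0 + y 1)
      ((ContinuousLinearMap.proj (0 : Fin 4) : (Fin 4 → ℝ) →L[ℝ] ℝ)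
        + ContinuousLinearMap.proj (1 : Fin 4)) x :=
    (hasFDerivAt_apply (0 : Fin 4) x).add (hasFDerivAt_apply (1 : Fin 4) x)
  have hA : HasFDerivAt (fun y : Fin 4 → ℝ => (y 0 + y 1) ^ a₂)
      ((a₂ * (x 0 + x 1) ^ (a₂ - 1)) •
        ((ContinuousLinearMap.proj (0 : Fin 4) : (Fin 4 → ℝ) →L[ℝ] ℝ)
          + ContinuousLinearMap.proj (1 : Fin 4))) x :=
    by have h := (Real.hasDerivAt_rpow_const (p := a₂) (Or.inl hs.ne')).comp_hasFDerivAt x hsum; exact h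
  have hB : HasFDerivAt (fun y : Fin 4 → ℝ => y 2 ^ (-c₁))
      ((-c₁ * x 2 ^ (-c₁ - 1)) •
        (ContinuousLinearMap.proj (2 : Fin 4) : (Fin 4 → ℝ) →L[ℝ] ℝ)) x :=
    by have h := (Real.hasDerivAt_rpow_const (p := -c₁) (Or.inl h2.ne')).comp_hasFDerivAt x (hasFDerivAt_apply (2 : Fin 4) x : HasFDerivAt (fun y : Fin 4 → ℝ => y 2) (ContinuousLinearMap.proj (2 : Fin 4) : (Fin 4 → ℝ) →L[ℝ] ℝ) x); exact h
  have hC : HasFDerivAt (fun y : Fin 4 → ℝ => y 3 ^ b₁)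
      ((b₁ * x 3 ^ (b₁ - 1)) •
        (ContinuousLinearMap.proj (3 : Fin 4) : (Fin 4 → ℝ) →L[ℝ] ℝ)) x :=
    by have h := (Real.hasDerivAt_rpow_const (p := b₁) (Or.inl h3.ne')).comp_hasFDerivAt x (hasFDerivAt_apply (3 : Fin 4) x : HasFDerivAt (fun y : Fin 4 → ℝ => y 3) (ContinuousLinearMap.proj (3 : Fin 4) : (Fin 4 → ℝ) →L[ℝ] ℝ) x); exact h
  have hF : HasFDerivAt F _ x := (hA.mul hB).mul hC
  have hfd := hF.fderiv
  have hg : ∀ i : Fin 4, grad F x i = fderiv ℝ F x (Pi.single i 1) := fun i => rfl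
  have e0 : grad F x 0 = a₂ * (x 0 + x 1) ^ (a₂ - 1) * x 2 ^ (-c₁) * x 3 ^ b₁ := by
    rw [hg, hfd]
    simp [Pi.single_apply]
    try ring
  have e1 : grad F x 1 = a₂ * (x 0 + x 1) ^ (a₂ - 1) * x 2 ^ (-c₁) * x 3 ^ b₁ := by
    rw [hg, hfd]
    simp [Pi.single_apply]
    try ring
  have e2 : grad F x 2 = (x 0 + x 1) ^ a₂ * (-c₁ * x 2 ^ (-c₁ - 1)) * x 3 ^ b₁ := by
    rw [hg, hfd]
    simp [Pi.single_apply]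
    try ring
  have e3 : grad F x 3 = (x 0 + x 1) ^ a₂ * x 2 ^ (-c₁) * (b₁ * x 3 ^ (b₁ - 1)) := by
    rw [hg, hfd]
    simp [Pi.single_apply]
    try ring
  have r1 : (x 0 + x 1) ^ (a₂ - 1) * (x 0 + x 1) = (x 0 + x 1) ^ a₂ := by
    rw [← Real.rpow_add_one hs.ne']; ring_nf
  have r2 : x 2 ^ (-c₁ - 1) * x 2 = x 2 ^ (-c₁) := by
    rw [← Real.rpow_add_one h2.ne']; ring_nf
  have r3 : x 3 ^ (b₁ - 1) * x 3 = x 3 ^ b₁ := by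
    rw [← Real.rpow_add_one h3.ne']; ring_nf
  simp only [lieDeriv, lvField, Fin.sum_univ_four, e0, e1, e2, e3, Pi.zero_apply]
  norm_num [A, Matrix.cons_val_zero, Matrix.cons_val_one, Matrix.head_cons,
    Matrix.cons_val_two, Matrix.cons_val_three, Matrix.tail_cons, Matrix.head_fin_const]
  linear_combination (a₂ * x 2 ^ (-c₁) * x 3 ^ b₁ * (b₁ * x 2 + c₁ * x 3)) * r1
    + (-c₁ * (x 0 + x 1) ^ a₂ * x 3 ^ b₁ * (-b₁ * (x 0 + x 1) + a₂ * x 3)) * r2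
    + (b₁ * (x 0 + x 1) ^ a₂ * x 2 ^ (-c₁) * (-c₁ * (x 0 + x 1) - a₂ * x 2)) * r3
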